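/- Let G be a group with exact factorization G = KH, H commutative, h² K h^{-2} ⊆ K for all h ∈ H, and B(kh) = h. Then for all g₁, g₂ ∈ G one has B(g₁)B(g₂) = B(g₁ B(g₂)) and B(B(g₁) g₂) = B(g₁ g₂); consequently, the linear extension of B to the group algebra k[G] satisfies the algebra Rota–Baxter identity of weight -1: B(a)B(b) = B(B(a)b + aB(b) - ab). -/

import Mathlib

/-- Given an exact factorization `G = K H` with `H` commutative and
`h² K h⁻² ⊆ K` for all `h ∈ H`, the map `B(kh) = h` satisfies
`B(g₁)B(g₂) = B(g₁ B(g₂))` and `B(B(g₁) g₂) = B(g₁ g₂)`, and its linear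
extension to the group algebra `k[G]` is an algebra Rota–Baxter operator of
weight `-1`. -/
theorem stmt_10 {G : Type*} [Group G] (K H : Subgroup G)
    (hfac : ∀ g : G, ∃ x ∈ K, ∃ h ∈ H, g = x * h)
    (hdisj : ∀ g : G, g ∈ K → g ∈ H → g = 1)
    (hcomm : ∀ a ∈ H, ∀ b ∈ H, a * b = b * a)
    (hconj : ∀ h ∈ H, ∀ x ∈ K, h ^ 2 * x * (h ^ 2)⁻¹ ∈ K)
    (B : G → G) (hB : ∀ x ∈ K, ∀ h ∈ H, B (x * h) = h)
    {k : Type*} [Field k]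
    (R : MonoidAlgebra k G →ₗ[k] MonoidAlgebra k G)
    (hR : ∀ g : G, R (MonoidAlgebra.of k G g) = MonoidAlgebra.of k G (B g)) :
    (∀ g₁ g₂ : G, B g₁ * B g₂ = B (g₁ * B g₂) ∧ B (B g₁ * g₂) = B (g₁ * g₂)) ∧
      ∀ a b : MonoidAlgebra k G, R a * R b = R (R a * b + a * R b - a * b) := by
  have key : ∀ g : G, g * (B g)⁻¹ ∈ K ∧ B g ∈ H := by
    intro g
    obtain ⟨x, hx, h, hh, rfl⟩ := hfac g
    rw [hB x hx h hh]
    exact ⟨by simpa using hx, hh⟩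
  have c1 : ∀ g₁ g₂ : G, B g₁ * B g₂ = B (g₁ * B g₂) := by
    intro g₁ g₂
    have h1 := (key g₁).2
    have h2 := (key g₂).2
    have hx := (key g₁).1
    have e : g₁ * B g₂ = (g₁ * (B g₁)⁻¹) * (B g₁ * B g₂) := by group
    rw [e, hB _ hx _ (H.mul_mem h1 h2)]
  have c2 : ∀ g₁ g₂ : G, B (B g₁ * g₂) = B (g₁ * g₂) := by
    intro g₁ g₂
    obtain ⟨hx1, hh1⟩ := key g₁
    obtain ⟨hx2, hh2⟩ := key g₂
    obtain ⟨y, hy, h, hh, hyh⟩ := hfac (B g₁ * (g₂ * (B g₂)⁻¹))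
    have e1 : B g₁ * g₂ = y * (h * B g₂) := by
      have e : B g₁ * g₂ = (B g₁ * (g₂ * (B g₂)⁻¹)) * B g₂ := by group
      rw [e, hyh]; group
    have e2 : g₁ * g₂ = ((g₁ * (B g₁)⁻¹) * y) * (h * B g₂) := by
      have e : g₁ * g₂ = (g₁ * (B g₁)⁻¹) * (B g₁ * (g₂ * (B g₂)⁻¹)) * B g₂ := by group
      rw [e, mul_assoc _ _ (B g₂), hyh]; group
    rw [e1, hB _ hy _ (H.mul_mem hh hh2), e2,
      hB _ (K.mul_mem hx1 hy) _ (H.mul_mem hh hh2)]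
  have single : ∀ g₁ g₂ : G,
      R (MonoidAlgebra.of k G g₁) * R (MonoidAlgebra.of k G g₂) =
        R (R (MonoidAlgebra.of k G g₁) * MonoidAlgebra.of k G g₂ +
            MonoidAlgebra.of k G g₁ * R (MonoidAlgebra.of k G g₂) -
            MonoidAlgebra.of k G g₁ * MonoidAlgebra.of k G g₂) := by
    intro g₁ g₂
    simp only [hR, ← map_mul]
    rw [map_sub, map_add, hR, hR, hR, c2, ← c1]
    abel
  refine ⟨fun g₁ g₂ => ⟨c1 g₁ g₂, c2 g₁ g₂⟩, fun a b => ?_⟩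
  induction a using MonoidAlgebra.induction_on with
  | of g₁ =>
    induction b using MonoidAlgebra.induction_on with
    | of g₂ => exact single g₁ g₂
    | add f g hf hg =>
      set a := MonoidAlgebra.of k G g₁
      have e : R a * (f + g) + a * R (f + g) - a * (f + g) =
          (R a * f + a * R f - a * f) + (R a * g + a * R g - a * g) := by
        simp only [mul_add, map_add]; abel
      rw [e, map_add, map_add, ← hf, ← hg, mul_add]
    | smul r f hf =>
      set a := MonoidAlgebra.of k G g₁
      have e : R a * (r • f) + a * R (r • f) - a * (r • f) =
          r • (R a * f + a * R f - a * f) := by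
        simp only [map_smul, mul_smul_comm, smul_add, smul_sub]
      rw [e, map_smul, map_smul, ← hf, mul_smul_comm]
  | add f g hf hg =>
    have e : R (f + g) * b + (f + g) * R b - (f + g) * b =
        (R f * b + f * R b - f * b) + (R g * b + g * R b - g * b) := by
      simp only [add_mul, map_add]; abel
    rw [e, map_add, map_add, ← hf, ← hg, add_mul]
  | smul r f hf =>
    have e : R (r • f) * b + (r • f) * R b - (r • f) * b =
        r • (R f * b + f * R b - f * b) := by
      simp only [map_smul, smul_mul_assoc, smul_add, smul_sub]
    rw [e, map_smul, map_smul, ← hf, smul_mul_assoc]
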